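/- Suppose v₀ = v_f, a > 0, and |4·(v_f + s₀ − s_f)| > a. Let σ := 1 if 4·(v_f + s₀ − s_f) > a and σ := −1 if 4·(v_f + s₀ − s_f) < −a, and set r := −σ·a and c₁ := 12·(v_f + s₀ − s_f) − 3·σ·a. Then the pair (u_𝒜, u_ℬ) defined by u_ℬ(t) = r for t ∈ [0, 1/2), u_ℬ(t) = −r for t ∈ [1/2, 1], and u_𝒜(t) = u_ℬ(t) + c₁·(t − 1/2) for t ∈ [0,1], is a best approximation pair for 𝒜 and ℬ. -/

import Mathlib

open MeasureTheory

/-- The measure on ℝ representing integration over the interval [0,1]. -/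
noncomputable def mu01 : Measure ℝ := volume.restrict (Set.Icc 0 1)

instance : IsFiniteMeasure mu01 := by
  constructor
  rw [mu01, Measure.restrict_apply_univ, Real.volume_Icc]
  exact ENNReal.ofReal_lt_top

lemma icc_vol_eq (f : ℝ → ℝ) {x y : ℝ} (h : x ≤ y) :
    ∫ t in Set.Icc x y, f t = ∫ t in x..y, f t := by
  rw [integral_Icc_eq_integral_Ioc, intervalIntegral.integral_of_le h]

lemma ico_vol_eq (f : ℝ → ℝ) {x y : ℝ} (h : x ≤ y) :
    ∫ t in Set.Ico x y, f t = ∫ t in x..y, f t := by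
  rw [integral_Ico_eq_integral_Ioo, ← integral_Ioc_eq_integral_Ioo,
    intervalIntegral.integral_of_le h]

lemma intpoly (A B C x y : ℝ) :
    ∫ t in x..y, (A*t^2 + B*t + C) =
      A*(y^3-x^3)/3 + B*(y^2-x^2)/2 + C*(y-x) := by
  have h1 : IntervalIntegrable (fun t : ℝ => A*t^2) volume x y :=
    (Continuous.mul continuous_const (continuous_pow 2)).intervalIntegrable x y
  have h2 : IntervalIntegrable (fun t : ℝ => B*t) volume x y :=
    (continuous_const.mul continuous_id').intervalIntegrable x y
  have h3 : IntervalIntegrable (fun t : ℝ => (C:ℝ)) volume x y :=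
    continuous_const.intervalIntegrable x y
  rw [intervalIntegral.integral_add (h1.add h2) h3, intervalIntegral.integral_add h1 h2,
    intervalIntegral.integral_const_mul, intervalIntegral.integral_const_mul,
    integral_pow, integral_id, intervalIntegral.integral_const]
  push_cast
  simp [smul_eq_mul]
  ring

lemma split01 (f : ℝ → ℝ) (h1 : IntegrableOn f (Set.Ico 0 (1/2)) volume)
    (h2 : IntegrableOn f (Set.Icc (1/2) 1) volume) :
    ∫ t, f t ∂mu01 = (∫ t in Set.Ico (0:ℝ) (1/2), f t) + ∫ t in Set.Icc (1/2:ℝ) 1, f t := by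
  have hu : Set.Ico (0:ℝ) (1/2) ∪ Set.Icc (1/2:ℝ) 1 = Set.Icc (0:ℝ) 1 :=
    Set.Ico_union_Icc_eq_Icc (by norm_num) (by norm_num)
  have hd : Disjoint (Set.Ico (0:ℝ) (1/2)) (Set.Icc (1/2:ℝ) 1) :=
    Set.disjoint_left.2 fun t ht ht' => absurd ht'.1 (not_le.2 ht.2)
  rw [mu01, ← hu, setIntegral_union hd measurableSet_Icc h1 h2]

example : True := trivial

lemma int_mu01 (f : ℝ → ℝ) : ∫ t, f t ∂mu01 = ∫ t in (0:ℝ)..1, f t := by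
  rw [mu01]; exact icc_vol_eq f (by norm_num)

lemma intIte (F G : ℝ → ℝ) (hF : Continuous F) (hG : Continuous G) :
    ∫ t, (if t < 1/2 then F t else G t) ∂mu01 =
      (∫ t in (0:ℝ)..(1/2), F t) + ∫ t in (1/2:ℝ)..1, G t := by
  have h1 : IntegrableOn (fun t => if t < 1/2 then F t else G t) (Set.Ico 0 (1/2)) volume := by
    apply ((hF.integrableOn_Icc (a := 0) (b := 1/2)).mono_set
      Set.Ico_subset_Icc_self).congr_fun ?_ measurableSet_Ico
    intro t ht; simp only []; rw [if_pos ht.2]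
  have h2 : IntegrableOn (fun t => if t < 1/2 then F t else G t) (Set.Icc (1/2) 1) volume := by
    apply (hG.integrableOn_Icc (a := 1/2) (b := 1)).congr_fun ?_ measurableSet_Icc
    intro t ht; simp only []; rw [if_neg (not_lt.2 ht.1)]
  rw [split01 _ h1 h2,
    setIntegral_congr_fun measurableSet_Ico (fun t ht => if_pos ht.2),
    setIntegral_congr_fun measurableSet_Icc (fun t (ht : t ∈ Set.Icc _ _) => if_neg (not_lt.2 ht.1)),
    ico_vol_eq F (by norm_num), icc_vol_eq G (by norm_num)]

lemma intB (r : ℝ) : ∫ t, (if t < 1/2 then r else -r) ∂mu01 = 0 := by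
  rw [intIte _ _ continuous_const continuous_const]
  simp
  ring

lemma intB1t (r : ℝ) : ∫ t, (1-t)*(if t < 1/2 then r else -r) ∂mu01 = r/4 := by
  have h : (fun t : ℝ => (1-t)*(if t < 1/2 then r else -r)) =
      fun t => if t < 1/2 then (0*t^2 + (-r)*t + r) else (0*t^2 + r*t + (-r)) := by
    funext t; split_ifs <;> ring
  rw [h, intIte _ _ (by continuity) (by continuity), intpoly, intpoly]
  ring

lemma intLin (c : ℝ) : ∫ t, c*(t-1/2) ∂mu01 = 0 := by
  have h : (fun t : ℝ => c*(t-1/2)) = fun t => (0*t^2 + c*t + (-(c/2))) := by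
    funext t; ring
  rw [h, int_mu01, intpoly]; ring

lemma intLin1t (c : ℝ) : ∫ t, (1-t)*(c*(t-1/2)) ∂mu01 = -c/12 := by
  have h : (fun t : ℝ => (1-t)*(c*(t-1/2))) =
      fun t => ((-c)*t^2 + (3*c/2)*t + (-(c/2))) := by
    funext t; ring
  rw [h, int_mu01, intpoly]; ring

lemma intSq (c : ℝ) : ∫ t, (c*(t-1/2))*(c*(t-1/2)) ∂mu01 = c^2/12 := by
  have h : (fun t : ℝ => (c*(t-1/2))*(c*(t-1/2))) =
      fun t => ((c^2)*t^2 + (-(c^2))*t + (c^2/4)) := by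
    funext t; ring
  rw [h, int_mu01, intpoly]; ring

lemma intAbs (c a : ℝ) : ∫ t, c * |t-1/2| * a ∂mu01 = c*a/4 := by
  have h : (fun t : ℝ => c * |t-1/2| * a) =
      fun t => if t < 1/2 then (0*t^2 + (-(c*a))*t + c*a/2) else (0*t^2 + (c*a)*t + (-(c*a/2))) := by
    funext t
    rcases lt_or_ge t (1/2) with ht | ht
    · rw [if_pos ht, abs_of_neg (by linarith)]; ring
    · rw [if_neg (not_lt.2 ht), abs_of_nonneg (by linarith)]; ring
  rw [h, intIte _ _ (by continuity) (by continuity), intpoly, intpoly]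
  ring


/-- The affine set 𝒜 of controls in L²([0,1],ℝ) steering the double integrator
from (s₀, v₀) to (s_f, v_f). -/
def setA (s0 sf v0 vf : ℝ) : Set (Lp ℝ 2 mu01) :=
  {u | (∫ t, u t ∂mu01) = vf - v0 ∧ (∫ t, (1 - t) * u t ∂mu01) = sf - s0 - v0}

/-- The box ℬ of controls bounded in absolute value by `a` a.e. on [0,1]. -/
def setB (a : ℝ) : Set (Lp ℝ 2 mu01) :=
  {u | ∀ᵐ t ∂mu01, |u t| ≤ a}

/-- Best approximation solution for the infeasible problem in the case v₀ = v_f: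
bang–bang control with switching time 1/2, with r = -σ·a and
c₁ = 12·(v_f + s₀ - s_f) - 3·σ·a. -/
theorem stmt_8 (s0 sf v0 vf a : ℝ) (ha : 0 < a) (hv : v0 = vf)
    (hbig : |4 * (vf + s0 - sf)| > a)
    (σ : ℝ) (hσ1 : 4 * (vf + s0 - sf) > a → σ = 1)
    (hσ2 : 4 * (vf + s0 - sf) < -a → σ = -1) :
    ∃ uA uB : Lp ℝ 2 mu01,
      (∀ᵐ t ∂mu01, uB t = if t < 1 / 2 then -σ * a else -(-σ * a)) ∧
      (∀ᵐ t ∂mu01, uA t = uB t + (12 * (vf + s0 - sf) - 3 * σ * a) * (t - 1 / 2)) ∧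
      uA ∈ setA s0 sf v0 vf ∧ uB ∈ setB a ∧
      ∀ x ∈ setA s0 sf v0 vf, ∀ y ∈ setB a, ‖uA - uB‖ ≤ ‖x - y‖ := by
  set K := vf + s0 - sf with hK
  have hcase : (σ = 1 ∧ 4*K > a) ∨ (σ = -1 ∧ 4*K < -a) := by
    rcases le_or_gt 0 (4*K) with h | h
    · have h4 : 4*K > a := by rwa [abs_of_nonneg h] at hbig
      exact Or.inl ⟨hσ1 h4, h4⟩
    · have h4 : 4*K < -a := by rw [abs_of_neg h] at hbig; linarith
      exact Or.inr ⟨hσ2 h4, h4⟩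
  set r : ℝ := -σ * a with hr
  set c : ℝ := 12 * K - 3 * σ * a with hc
  -- sign facts
  have hcpos_or : (σ = 1 ∧ 0 < c) ∨ (σ = -1 ∧ c < 0) := by
    rcases hcase with ⟨h1, h2⟩ | ⟨h1, h2⟩
    · exact Or.inl ⟨h1, by rw [hc, h1]; nlinarith⟩
    · exact Or.inr ⟨h1, by rw [hc, h1]; nlinarith⟩
  have hσabs : |σ| = 1 := by rcases hcase with ⟨h1, _⟩ | ⟨h1, _⟩ <;> simp [h1]
  have hae : ∀ᵐ t ∂mu01, t ∈ Set.Icc (0:ℝ) 1 := ae_restrict_mem measurableSet_Icc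
  set fB : ℝ → ℝ := fun t => if t < 1/2 then r else -r with hfB
  set fA : ℝ → ℝ := fun t => fB t + c * (t - 1/2) with hfA
  have hmB : Measurable fB :=
    Measurable.ite (measurableSet_lt measurable_id measurable_const)
      measurable_const measurable_const
  have hmemB : MemLp fB 2 mu01 := by
    apply MemLp.of_bound hmB.aestronglyMeasurable (|r|)
    refine ae_of_all _ fun t => ?_
    rw [hfB]; dsimp only
    split_ifs <;> simp [Real.norm_eq_abs, abs_neg]
  have hmA : Measurable fA := by
    apply hmB.add
    exact (measurable_const.mul (measurable_id.sub measurable_const))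
  have hmemA : MemLp fA 2 mu01 := by
    apply MemLp.of_bound hmA.aestronglyMeasurable (|r| + |c|)
    filter_upwards [hae] with t ht
    have h1 : |t - 1/2| ≤ 1/2 := abs_le.2 ⟨by linarith [ht.1], by linarith [ht.2]⟩
    have h2 : |fB t| ≤ |r| := by
      rw [hfB]; dsimp only
      split_ifs <;> simp [abs_neg]
    have h3 : |c * (t - 1/2)| ≤ |c| := by
      rw [abs_mul]
      nlinarith [abs_nonneg c, abs_nonneg (t - 1/2)]
    calc ‖fA t‖ = |fB t + c * (t - 1/2)| := rfl
      _ ≤ |fB t| + |c * (t - 1/2)| := abs_add_le _ _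
      _ ≤ |r| + |c| := add_le_add h2 h3
  have hIB : Integrable fB mu01 := hmemB.integrable (by norm_num)
  have hILin : Integrable (fun t => c * (t - 1/2)) mu01 := by
    exact (continuous_const.mul (continuous_id'.sub continuous_const)).integrableOn_Icc
  refine ⟨hmemA.toLp fA, hmemB.toLp fB, ?_, ?_, ?_, ?_, ?_⟩
  · filter_upwards [hmemB.coeFn_toLp] with t ht
    rw [ht]
  · filter_upwards [hmemA.coeFn_toLp, hmemB.coeFn_toLp] with t htA htB
    rw [htA, htB, hfA]
  · constructor
    · have h1 : ∫ t, (hmemA.toLp fA) t ∂mu01 = ∫ t, fA t ∂mu01 :=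
        integral_congr_ae hmemA.coeFn_toLp
      rw [h1, hfA, integral_add hIB hILin, intB, intLin, hv]
      ring
    · have h1 : ∫ t, (1 - t) * (hmemA.toLp fA) t ∂mu01 = ∫ t, (1 - t) * fA t ∂mu01 := by
        apply integral_congr_ae
        filter_upwards [hmemA.coeFn_toLp] with t ht
        rw [ht]
      have hIB1 : Integrable (fun t => (1 - t) * fB t) mu01 := by
        apply hIB.bdd_mul (c := 1)
          ((continuous_const.sub continuous_id').aestronglyMeasurable)
        filter_upwards [hae] with t ht
        simp only [Real.norm_eq_abs, Pi.sub_apply]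
        exact abs_le.2 ⟨by linarith [ht.2], by linarith [ht.1]⟩
      have hIL1 : Integrable (fun t => (1 - t) * (c * (t - 1/2))) mu01 := by
        exact ((continuous_const.sub continuous_id').mul
          (continuous_const.mul (continuous_id'.sub continuous_const))).integrableOn_Icc
      have h2 : (fun t => (1 - t) * fA t) =
          fun t => (1 - t) * fB t + (1 - t) * (c * (t - 1/2)) := by
        funext t; rw [hfA]; ring
      rw [h1, h2, integral_add hIB1 hIL1, intB1t, intLin1t]
      rw [hr, hc, hK, hv]
      ring
  · filter_upwards [hmemB.coeFn_toLp] with t ht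
    rw [ht, hfB]; dsimp only
    have : |r| = a := by rw [hr, abs_mul, abs_neg, hσabs, one_mul, abs_of_pos ha]
    split_ifs
    · exact this.le
    · rw [abs_neg]; exact this.le
  · intro x hx y hy
    set d := hmemA.toLp fA - hmemB.toLp fB with hd
    have hdae : (d : ℝ → ℝ) =ᵐ[mu01] fun t => c * (t - 1/2) := by
      refine (Lp.coeFn_sub _ _).trans ?_
      filter_upwards [hmemA.coeFn_toLp, hmemB.coeFn_toLp] with t htA htB
      simp only [Pi.sub_apply]
      rw [htA, htB, hfA]; ring
    have hxint : Integrable (x : ℝ → ℝ) mu01 := (Lp.memLp x).integrable (by norm_num)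
    have hyint : Integrable (y : ℝ → ℝ) mu01 := (Lp.memLp y).integrable (by norm_num)
    have hx1 : ∫ t, x t ∂mu01 = 0 := by rw [hx.1, hv]; ring
    have hx2 : ∫ t, (1 - t) * x t ∂mu01 = sf - s0 - v0 := hx.2
    have hIone : Integrable (fun t => (1 - t) * x t) mu01 := by
      apply hxint.bdd_mul (c := 1)
        ((continuous_const.sub continuous_id').aestronglyMeasurable)
      filter_upwards [hae] with t ht
      simp only [Real.norm_eq_abs, Pi.sub_apply]
      exact abs_le.2 ⟨by linarith [ht.2], by linarith [ht.1]⟩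
    -- inner products
    have hnormsq : ‖d‖^2 = c^2/12 := by
      rw [← real_inner_self_eq_norm_sq, L2.inner_def]
      have : ∫ t, (inner ℝ (d t) (d t) : ℝ) ∂mu01
          = ∫ t, (c * (t - 1/2)) * (c * (t - 1/2)) ∂mu01 := by
        apply integral_congr_ae
        filter_upwards [hdae] with t ht
        rw [RCLike.inner_apply', starRingEnd_apply, star_trivial, ht]
      rw [this, intSq]
    have hdx : (inner ℝ d x : ℝ) = c * K := by
      rw [L2.inner_def]
      have h1 : ∫ t, (inner ℝ (d t) (x t) : ℝ) ∂mu01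
          = ∫ t, (c * (t - 1/2)) * x t ∂mu01 := by
        apply integral_congr_ae
        filter_upwards [hdae] with t ht
        rw [RCLike.inner_apply', starRingEnd_apply, star_trivial, ht]
      have h2 : (fun t => (c * (t - 1/2)) * x t) =
          fun t => c * (x t) - (c * ((1 - t) * x t) + (c/2) * (x t)) := by
        funext t; ring
      have hInt1 : Integrable (fun t => c * (x t : ℝ)) mu01 := hxint.const_mul c
      have hInt2 : Integrable (fun t => c * ((1-t) * (x t : ℝ))) mu01 := hIone.const_mul c
      have hInt3 : Integrable (fun t => (c/2) * (x t : ℝ)) mu01 := hxint.const_mul (c/2)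
      have hInt23 : Integrable (fun t => c * ((1-t) * (x t : ℝ)) + (c/2) * (x t : ℝ)) mu01 :=
        hInt2.add hInt3
      rw [h1, h2, integral_sub hInt1 hInt23, integral_add hInt2 hInt3,
        integral_const_mul, integral_const_mul, integral_const_mul, hx1, hx2, hK, hv]
      ring
    have hdy : (inner ℝ d y : ℝ) ≤ |c| * a / 4 := by
      rw [L2.inner_def]
      have h1 : ∫ t, (inner ℝ (d t) (y t) : ℝ) ∂mu01
          = ∫ t, (c * (t - 1/2)) * y t ∂mu01 := by
        apply integral_congr_ae
        filter_upwards [hdae] with t ht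
        rw [RCLike.inner_apply', starRingEnd_apply, star_trivial, ht]
      rw [h1]
      have hIL : Integrable (fun t => (c * (t - 1/2)) * y t) mu01 := by
        apply hyint.bdd_mul (c := |c| * (1/2))
          ((continuous_const.mul (continuous_id'.sub continuous_const)).aestronglyMeasurable)
        filter_upwards [hae] with t ht
        simp only [Real.norm_eq_abs, Pi.mul_apply, Pi.sub_apply]
        rw [abs_mul]
        have h1 : |t - 1/2| ≤ 1/2 := abs_le.2 ⟨by linarith [ht.1], by linarith [ht.2]⟩
        exact mul_le_mul_of_nonneg_left h1 (abs_nonneg c)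
      have hIR : Integrable (fun t => |c| * |t - 1/2| * a) mu01 := by
        have : Continuous (fun t : ℝ => |c| * |t - 1/2| * a) := by
          exact (continuous_const.mul (continuous_abs.comp (continuous_id'.sub continuous_const))).mul continuous_const
        exact this.integrableOn_Icc
      calc ∫ t, (c * (t - 1/2)) * y t ∂mu01
          ≤ ∫ t, |c| * |t - 1/2| * a ∂mu01 := by
            apply integral_mono_ae hIL hIR
            filter_upwards [hy] with t hyt
            calc (c * (t - 1/2)) * y t ≤ |(c * (t - 1/2)) * y t| := le_abs_self _
              _ = |c| * |t - 1/2| * |y t| := by rw [abs_mul, abs_mul]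
              _ ≤ |c| * |t - 1/2| * a := by
                  apply mul_le_mul_of_nonneg_left hyt
                  positivity
        _ = |c| * a / 4 := intAbs _ _
    have hkey : ‖d‖^2 ≤ (inner ℝ d (x - y) : ℝ) := by
      rw [inner_sub_right, hdx, hnormsq]
      have : c * K - |c| * a / 4 = c^2/12 := by
        rcases hcpos_or with ⟨h1, h2⟩ | ⟨h1, h2⟩
        · rw [abs_of_pos h2, hc, h1]; ring
        · rw [abs_of_neg h2, hc, h1]; ring
      linarith [hdy]
    have hdpos : 0 < ‖d‖ := by
      have hc2 : 0 < c^2/12 := by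
        rcases hcpos_or with ⟨_, h2⟩ | ⟨_, h2⟩
        · nlinarith [mul_pos h2 h2]
        · nlinarith [mul_pos_of_neg_of_neg h2 h2]
      nlinarith [norm_nonneg d, hnormsq]
    have hcs : (inner ℝ d (x - y) : ℝ) ≤ ‖d‖ * ‖x - y‖ := real_inner_le_norm d (x - y)
    have h5 : ‖d‖^2 ≤ ‖d‖ * ‖x - y‖ := le_trans hkey hcs
    rw [pow_two] at h5
    exact le_of_mul_le_mul_left h5 hdpos
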